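/- Fix D ≥ 1, ε > 0 and 0 < δ₁ < ε. For 0 < δ ≤ δ₁ and z ∈ V, let C_z^δ denote the convex hull of H_z^δ ∪ H_z^{δ₁}. Then for any two distinct z, z' ∈ V and any 0 < δ ≤ δ₁, the closures of C_z^δ and C_{z'}^δ are disjoint: closure(C_z^δ) ∩ closure(C_{z'}^δ) = ∅. -/
import Mathlib


/-- `r` is a half-integer: `r = n/2` with `n` an odd integer. -/
def IsHalfInt (r : ℝ) : Prop := ∃ n : ℤ, Odd n ∧ r = (n : ℝ) / 2

/-- `V`: the set of points of `ℝ^D` having exactly `D - 1` integer coordinates, the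
remaining coordinate being a half-integer. -/
def Vset (D : ℕ) : Set (Fin D → ℝ) :=
  {z | ∃ k₀ : Fin D, IsHalfInt (z k₀) ∧ ∀ k : Fin D, k ≠ k₀ → ∃ m : ℤ, z k = (m : ℝ)}

/-- The open box `H_z^δ`: coordinates with `z_k ∈ ℤ` are within `(ε-δ)/2` of `ε z_k`,
coordinates with `z_k` a half-integer are within `δ/4` of `ε z_k`. -/
def Hcube (D : ℕ) (ε δ : ℝ) (z : Fin D → ℝ) : Set (Fin D → ℝ) :=
  {a | ∀ k, ((∃ m : ℤ, z k = (m : ℝ)) → |a k - ε * z k| < (ε - δ) / 2) ∧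
            (IsHalfInt (z k) → |a k - ε * z k| < δ / 4)}




lemma half_int_gap {r s : ℝ} (hr : IsHalfInt r) (hs : ∃ m : ℤ, s = (m : ℝ)) :
    (1:ℝ)/2 ≤ |r - s| := by
  obtain ⟨n, hn, rfl⟩ := hr
  obtain ⟨m, rfl⟩ := hs
  have e : (n:ℝ)/2 - m = ((n - 2*m : ℤ) : ℝ)/2 := by push_cast; ring
  have hodd : Odd (n - 2*m) := hn.sub_even (even_two_mul m)
  have hne : n - 2*m ≠ 0 := by obtain ⟨j, hj⟩ := hodd; omega
  have h1 : (1:ℝ) ≤ |((n - 2*m : ℤ) : ℝ)| := by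
    rw [← Int.cast_abs]; exact_mod_cast Int.one_le_abs hne
  rw [e, abs_div, abs_two]; linarith

lemma half_half_gap {r s : ℝ} (hr : IsHalfInt r) (hs : IsHalfInt s) (hne : r ≠ s) :
    (1:ℝ) ≤ |r - s| := by
  obtain ⟨n, hn, rfl⟩ := hr
  obtain ⟨n', hn', rfl⟩ := hs
  have hnn : n ≠ n' := by rintro rfl; exact hne rfl
  have e : (n:ℝ)/2 - (n':ℝ)/2 = ((n - n' : ℤ) : ℝ)/2 := by push_cast; ring
  have heven : Even (n - n') := hn.sub_odd hn'
  have h2 : (2:ℝ) ≤ |((n - n' : ℤ) : ℝ)| := by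
    rw [← Int.cast_abs]
    have h3 : 2 ≤ (n - n').natAbs := by obtain ⟨j, hj⟩ := heven; omega
    have : (2:ℤ) ≤ |n - n'| := by rw [Int.abs_eq_natAbs]; exact_mod_cast h3
    exact_mod_cast this
  rw [e, abs_div, abs_two]; linarith

lemma int_int_gap {r s : ℝ} (hr : ∃ m : ℤ, r = (m : ℝ)) (hs : ∃ m : ℤ, s = (m : ℝ))
    (hne : r ≠ s) : (1:ℝ) ≤ |r - s| := by
  obtain ⟨m, rfl⟩ := hr
  obtain ⟨m', rfl⟩ := hs
  have hmm : m ≠ m' := by rintro rfl; exact hne rfl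
  have e : (m:ℝ) - (m':ℝ) = ((m - m' : ℤ) : ℝ) := by push_cast; ring
  rw [e, ← Int.cast_abs]
  exact_mod_cast Int.one_le_abs (by omega)

lemma bound_on_closure_hull {D : ℕ} {S : Set (Fin D → ℝ)} (c₁ c₂ : ℝ)
    (hc₁ : 0 ≤ c₁) (hc₂ : 0 ≤ c₂) (k h : Fin D) (b₁ b₂ C : ℝ)
    (hS : ∀ a ∈ S, c₁ * |a k - b₁| + c₂ * |a h - b₂| ≤ C) :
    ∀ a ∈ closure (convexHull ℝ S), c₁ * |a k - b₁| + c₂ * |a h - b₂| ≤ C := by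
  set T : Set (Fin D → ℝ) := {a | c₁ * |a k - b₁| + c₂ * |a h - b₂| ≤ C} with hT
  have hconv : Convex ℝ T := by
    intro x hx y hy s t hs ht hst
    simp only [hT, Set.mem_setOf_eq] at hx hy ⊢
    have e1 : (s • x + t • y) k - b₁ = s * (x k - b₁) + t * (y k - b₁) := by
      simp only [Pi.add_apply, Pi.smul_apply, smul_eq_mul]
      linear_combination b₁ * hst
    have e2 : (s • x + t • y) h - b₂ = s * (x h - b₂) + t * (y h - b₂) := by
      simp only [Pi.add_apply, Pi.smul_apply, smul_eq_mul]
      linear_combination b₂ * hst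
    have hA : |(s • x + t • y) k - b₁| ≤ s * |x k - b₁| + t * |y k - b₁| := by
      rw [e1]
      calc |s * (x k - b₁) + t * (y k - b₁)| ≤ |s * (x k - b₁)| + |t * (y k - b₁)| :=
            abs_add_le _ _
        _ = s * |x k - b₁| + t * |y k - b₁| := by
            rw [abs_mul, abs_mul, abs_of_nonneg hs, abs_of_nonneg ht]
    have hB : |(s • x + t • y) h - b₂| ≤ s * |x h - b₂| + t * |y h - b₂| := by
      rw [e2]
      calc |s * (x h - b₂) + t * (y h - b₂)| ≤ |s * (x h - b₂)| + |t * (y h - b₂)| :=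
            abs_add_le _ _
        _ = s * |x h - b₂| + t * |y h - b₂| := by
            rw [abs_mul, abs_mul, abs_of_nonneg hs, abs_of_nonneg ht]
    have hC : s * C + t * C = C := by linear_combination C * hst
    nlinarith [mul_le_mul_of_nonneg_left hA hc₁, mul_le_mul_of_nonneg_left hB hc₂,
      mul_le_mul_of_nonneg_left hx hs, mul_le_mul_of_nonneg_left hy ht, hC]
  have hclosed : IsClosed T :=
    isClosed_le ((continuous_const.mul (((continuous_apply k).sub continuous_const).abs)).add
      (continuous_const.mul (((continuous_apply h).sub continuous_const).abs))) continuous_const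
  exact fun a ha => closure_minimal (convexHull_min hS hconv) hclosed ha

/-- Bounds satisfied by every point in the closure of the convex hull of
`H_z^δ ∪ H_z^{δ₁}`. -/
lemma cube_bounds (D : ℕ) (ε δ δ₁ : ℝ) (hδ0 : 0 < δ) (hδδ₁ : δ ≤ δ₁)
    (z : Fin D → ℝ) (h : Fin D) (hh : IsHalfInt (z h)) (a : Fin D → ℝ)
    (ha : a ∈ closure (convexHull ℝ (Hcube D ε δ z ∪ Hcube D ε δ₁ z))) :
    (∀ k, (∃ m : ℤ, z k = (m : ℝ)) →
      |a k - ε * z k| ≤ (ε - δ) / 2 ∧ 2 * |a k - ε * z k| + 4 * |a h - ε * z h| ≤ ε) ∧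
    |a h - ε * z h| ≤ δ₁ / 4 := by
  constructor
  · intro k hk
    constructor
    · have := bound_on_closure_hull (D := D) 1 0 zero_le_one le_rfl k h (ε * z k) (ε * z h)
        ((ε - δ) / 2) ?_ a ha
      · linarith [this]
      · rintro b (hb | hb)
        · have := (hb k).1 hk; simp only [one_mul, zero_mul, add_zero]; linarith
        · have := (hb k).1 hk; simp only [one_mul, zero_mul, add_zero]; linarith
    · have := bound_on_closure_hull (D := D) 2 4 (by norm_num) (by norm_num) k h
        (ε * z k) (ε * z h) ε ?_ a ha
      · linarith [this]
      · rintro b (hb | hb)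
        · have h1 := (hb k).1 hk; have h2 := (hb h).2 hh; linarith
        · have h1 := (hb k).1 hk; have h2 := (hb h).2 hh; linarith
  · have := bound_on_closure_hull (D := D) 0 1 le_rfl zero_le_one h h (ε * z h) (ε * z h)
      (δ₁ / 4) ?_ a ha
    · linarith [this]
    · rintro b (hb | hb)
      · have := (hb h).2 hh; simp only [one_mul, zero_mul, zero_add]; linarith
      · have := (hb h).2 hh; simp only [one_mul, zero_mul, zero_add]; linarith

/-- Lemma 5.2 (1): for `0 < δ ≤ δ₁ < ε` and distinct `z, z' ∈ V`, the closures of the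
convex hulls `C_z^δ = conv(H_z^δ ∪ H_z^{δ₁})` and `C_{z'}^δ` are disjoint. -/
theorem convex_hull_domains_disjoint (D : ℕ) (hD : 1 ≤ D) (ε δ₁ δ : ℝ)
    (hδ₁0 : 0 < δ₁) (hδ₁ε : δ₁ < ε) (hδ0 : 0 < δ) (hδδ₁ : δ ≤ δ₁)
    (z z' : Fin D → ℝ) (hz : z ∈ Vset D) (hz' : z' ∈ Vset D) (hne : z ≠ z') :
    closure (convexHull ℝ (Hcube D ε δ z ∪ Hcube D ε δ₁ z)) ∩
      closure (convexHull ℝ (Hcube D ε δ z' ∪ Hcube D ε δ₁ z')) = ∅ := by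
  have hε : 0 < ε := lt_trans hδ₁0 hδ₁ε
  rw [Set.eq_empty_iff_forall_notMem]
  rintro a ⟨ha, ha'⟩
  obtain ⟨h, hh, hint⟩ := hz
  obtain ⟨h', hh', hint'⟩ := hz'
  obtain ⟨hA, hB⟩ := cube_bounds D ε δ δ₁ hδ0 hδδ₁ z h hh a ha
  obtain ⟨hA', hB'⟩ := cube_bounds D ε δ δ₁ hδ0 hδδ₁ z' h' hh' a ha'
  by_cases hhh : h = h'
  · subst hhh
    obtain ⟨k, hk⟩ := Function.ne_iff.mp hne
    by_cases hkh : k = h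
    · subst hkh
      have gap : (1:ℝ) ≤ |z k - z' k| := half_half_gap hh hh' hk
      have tri : |ε * z k - ε * z' k| ≤ |a k - ε * z k| + |a k - ε * z' k| := by
        calc |ε * z k - ε * z' k| ≤ |ε * z k - a k| + |a k - ε * z' k| := abs_sub_le _ _ _
          _ = |a k - ε * z k| + |a k - ε * z' k| := by rw [abs_sub_comm (ε * z k) (a k)]
      have egap : ε ≤ |ε * z k - ε * z' k| := by
        rw [← mul_sub, abs_mul, abs_of_pos hε]
        nlinarith [mul_le_mul_of_nonneg_left gap hε.le]
      linarith
    · have hik : ∃ m : ℤ, z k = (m : ℝ) := hint k hkh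
      have hik' : ∃ m : ℤ, z' k = (m : ℝ) := hint' k hkh
      have gap : (1:ℝ) ≤ |z k - z' k| := int_int_gap hik hik' hk
      have b1 := (hA k hik).1
      have b2 := (hA' k hik').1
      have tri : |ε * z k - ε * z' k| ≤ |a k - ε * z k| + |a k - ε * z' k| := by
        calc |ε * z k - ε * z' k| ≤ |ε * z k - a k| + |a k - ε * z' k| := abs_sub_le _ _ _
          _ = |a k - ε * z k| + |a k - ε * z' k| := by rw [abs_sub_comm (ε * z k) (a k)]
      have egap : ε ≤ |ε * z k - ε * z' k| := by
        rw [← mul_sub, abs_mul, abs_of_pos hε]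
        nlinarith [mul_le_mul_of_nonneg_left gap hε.le]
      linarith
  · -- h ≠ h' : cross argument
    have hzh' : ∃ m : ℤ, z h' = (m : ℝ) := hint h' (Ne.symm hhh)
    have hz'h : ∃ m : ℤ, z' h = (m : ℝ) := hint' h hhh
    -- bounds
    obtain ⟨bv', bc⟩ := hA h' hzh'      -- |a h' - εz h'| ≤ (ε-δ)/2, 2|a h'-εz h'|+4|a h-εz h| ≤ ε
    obtain ⟨bu', bc'⟩ := hA' h hz'h     -- |a h - εz' h| ≤ (ε-δ)/2, 2|a h-εz' h|+4|a h'-εz' h'| ≤ ε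
    -- gaps
    have gap1 : (1:ℝ)/2 ≤ |z h - z' h| := half_int_gap hh hz'h
    have gap2 : (1:ℝ)/2 ≤ |z' h' - z h'| := half_int_gap hh' hzh'
    have egap1 : ε / 2 ≤ |ε * z h - ε * z' h| := by
      rw [← mul_sub, abs_mul, abs_of_pos hε]
      nlinarith [mul_le_mul_of_nonneg_left gap1 hε.le]
    have egap2 : ε / 2 ≤ |ε * z' h' - ε * z h'| := by
      rw [← mul_sub, abs_mul, abs_of_pos hε]
      nlinarith [mul_le_mul_of_nonneg_left gap2 hε.le]
    have tri1 : |ε * z h - ε * z' h| ≤ |a h - ε * z h| + |a h - ε * z' h| := by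
      calc |ε * z h - ε * z' h| ≤ |ε * z h - a h| + |a h - ε * z' h| := abs_sub_le _ _ _
        _ = |a h - ε * z h| + |a h - ε * z' h| := by rw [abs_sub_comm (ε * z h) (a h)]
    have tri2 : |ε * z' h' - ε * z h'| ≤ |a h' - ε * z' h'| + |a h' - ε * z h'| := by
      calc |ε * z' h' - ε * z h'| ≤ |ε * z' h' - a h'| + |a h' - ε * z h'| := abs_sub_le _ _ _
        _ = |a h' - ε * z' h'| + |a h' - ε * z h'| := by rw [abs_sub_comm (ε * z' h') (a h')]
    linarith
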